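/- Let Γ be a moment graph on Λ and let ξ = {ξ_v}_{v∈V} be a Γ-monodromy. Then the map z ↦ (ξ_v(z))_{v∈V}, where each ξ_v acts on the group ring ℤ[Λ] by e^λ ↦ e^{ξ_v(λ)}, takes values in the multiplicative structure algebra Z_m(Γ) and defines a ring homomorphism c^ξ : ℤ[Λ] → Z_m(Γ) (the ξ-characteristic map). Likewise, the map z ↦ (ξ_v(z))_{v∈V}, where ξ_v acts on the symmetric algebra S*(Λ) by functoriality, takes values in Z_a(Γ) and defines a ring homomorphism c^ξ : S*(Λ) → Z_a(Γ). -/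

import Mathlib

noncomputable section

/-- A moment graph on a lattice `Λ`: a poset of vertices (the order given as a
relation with axioms), a set of directed edges `E ⊆ V × V`, and a label function
assigning to each edge a nonzero element of `Λ`, such that edges respect the
order and are not loops. -/
structure MomentGraph (Λ : Type*) [AddCommGroup Λ] (V : Type*) where
  le : V → V → Prop
  le_refl : ∀ v, le v v
  le_trans : ∀ u v w, le u v → le v w → le u w
  le_antisymm : ∀ v w, le v w → le w v → v = w
  E : V → V → Prop
  label : V → V → Λ
  label_ne_zero : ∀ {v w}, E v w → label v w ≠ 0
  le_of_E : ∀ {v w}, E v w → le v w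
  ne_of_E : ∀ {v w}, E v w → v ≠ w

namespace MomentGraph

variable {Λ : Type*} [AddCommGroup Λ] {V V' : Type*}

/-- Underlying (unoriented) adjacency `v — w`. -/
def Adj (G : MomentGraph Λ V) (v w : V) : Prop := G.E v w ∨ G.E w v

open Classical in
/-- The label of the unoriented edge `v — w` (there are no multiple edges, so this
is well defined on adjacent pairs). -/
def albl (G : MomentGraph Λ V) (v w : V) : Λ := if G.E v w then G.label v w else G.label w v

/-- A morphism of moment graphs on the same lattice `Λ` (Definition 2.3):
a poset morphism on vertices sending edges to edges or collapsing them (MR1),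
together with a `ℤ`-linear automorphism of `Λ` for every vertex satisfying
(MR2)(a) and (MR2)(b). -/
structure Hom (G : MomentGraph Λ V) (G' : MomentGraph Λ V') where
  toFun : V → V'
  mono : ∀ {v w}, G.le v w → G'.le (toFun v) (toFun w)
  adj : ∀ {v w}, G.Adj v w → G'.Adj (toFun v) (toFun w) ∨ toFun v = toFun w
  aut : V → (Λ ≃ₗ[ℤ] Λ)
  label_pm : ∀ {v w}, G.Adj v w → toFun v ≠ toFun w →
      aut v (G.albl v w) = G'.albl (toFun v) (toFun w) ∨
      aut v (G.albl v w) = - G'.albl (toFun v) (toFun w)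
  compat : ∀ {v w}, G.Adj v w → toFun v ≠ toFun w → ∀ μ : Λ,
      ∃ n : ℤ, aut v μ - aut w μ = n • G'.albl (toFun v) (toFun w)

/-- A morphism of moment graphs is an isomorphism if it has a two-sided inverse
morphism, inverting both the vertex map and the label automorphisms. -/
def Hom.IsIso {G : MomentGraph Λ V} {G' : MomentGraph Λ V'} (f : G.Hom G') : Prop :=
  ∃ g : G'.Hom G, (∀ v, g.toFun (f.toFun v) = v) ∧ (∀ v', f.toFun (g.toFun v') = v') ∧
    ∀ v (μ : Λ), g.aut (f.toFun v) (f.aut v μ) = μ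

/-- A `Γ`-monodromy: a collection of lattice automorphisms `ξ_v` with
`ξ_v(λ) - ξ_w(λ) ∈ l(v → w)·ℤ` for all edges `v → w`. -/
def Monodromy (G : MomentGraph Λ V) (ξ : V → (Λ ≃ₗ[ℤ] Λ)) : Prop :=
  ∀ {v w}, G.E v w → ∀ μ : Λ, ∃ n : ℤ, ξ v μ - ξ w μ = n • G.label v w

/-- A `Γ`-compatible equivalence relation (EQV1) and (EQV2). -/
def Compatible (G : MomentGraph Λ V) (s : Setoid V) : Prop :=
  (∀ ⦃v w u⦄, s.r v w → G.le v u → G.le u w → s.r v u) ∧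
  (∀ ⦃v₁ w₁⦄, G.E v₁ w₁ → ¬ s.r v₁ w₁ → ∀ v₂, s.r v₂ v₁ →
    (∃! w₂, s.r w₂ w₁ ∧ G.E v₂ w₂) ∧
    (∀ w₂, s.r w₂ w₁ → G.E v₂ w₂ → G.label v₂ w₂ = G.label v₁ w₁))

/-- Edges of the quotient graph: `[v] → [w]` iff `v ≁ w` and there are
representatives joined by an edge. -/
def QE (G : MomentGraph Λ V) (s : Setoid V) (a b : Quotient s) : Prop :=
  a ≠ b ∧ ∃ v w, Quotient.mk s v = a ∧ Quotient.mk s w = b ∧ G.E v w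

open Classical in
/-- The label of a quotient edge, via a choice of representatives. -/
def Qlabel (G : MomentGraph Λ V) (s : Setoid V) (a b : Quotient s) : Λ :=
  if h : ∃ v, ∃ w, Quotient.mk s v = a ∧ Quotient.mk s w = b ∧ G.E v w
  then G.label h.choose h.choose_spec.choose else 0

/-- The covering relation of the vertex poset. -/
def cov (G : MomentGraph Λ V) (v w : V) : Prop :=
  G.le v w ∧ v ≠ w ∧ ∀ u, G.le v u → G.le u w → u = v ∨ u = w

/-- A special matching of the vertex poset (Definition of Brenti): a bijection `M`
such that `M(v)` covers or is covered by `v`, and if `M(v) ≠ w` and `v ⋖ w`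
then `M(v) ≤ M(w)`. -/
def SpecialMatching (G : MomentGraph Λ V) (M : V → V) : Prop :=
  Function.Bijective M ∧ (∀ v, G.cov (M v) v ∨ G.cov v (M v)) ∧
  (∀ v w, M v ≠ w → G.cov v w → G.le (M v) (M w))

end MomentGraph

noncomputable section StructureAlgebras

/-- The generic "structure algebra" construction: given an edge relation `E` on `V`
and an `A`-valued function `lab` (the image of the label of each edge in `A`),
this is the subalgebra of `∏_{v ∈ V} A` of tuples `(z_v)` with
`z_v - z_w ∈ lab v w · A` for every edge `v → w`, with coordinate-wise operations
and with `A` acting diagonally. -/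
def structAlg {V : Type*} {A : Type*} [CommRing A] (E : V → V → Prop) (lab : V → V → A) :
    Subalgebra A (V → A) where
  carrier := {z | ∀ ⦃v w⦄, E v w → ∃ t, z v - z w = lab v w * t}
  mul_mem' := by
    intro a b ha hb v w h
    obtain ⟨t, ht⟩ := ha h
    obtain ⟨t', ht'⟩ := hb h
    refine ⟨a v * t' + t * b w, ?_⟩
    simp only [Pi.mul_apply]
    linear_combination a v * ht' + b w * ht
  one_mem' := by intro v w h; exact ⟨0, by simp⟩
  add_mem' := by
    intro a b ha hb v w h
    obtain ⟨t, ht⟩ := ha h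
    obtain ⟨t', ht'⟩ := hb h
    refine ⟨t + t', ?_⟩
    simp only [Pi.add_apply]
    linear_combination ht + ht'
  zero_mem' := by intro v w h; exact ⟨0, by simp⟩
  algebraMap_mem' := by
    intro r v w h
    exact ⟨0, by simp⟩

set_option synthInstance.maxHeartbeats 4000000 in
instance structAlgAddCommGroup {V A : Type*} [CommRing A] (E : V → V → Prop)
    (lab : V → V → A) : AddCommGroup (structAlg E lab) :=
  inferInstance

set_option synthInstance.maxHeartbeats 4000000 in
instance structAlgModule {V A : Type*} [CommRing A] (E : V → V → Prop)
    (lab : V → V → A) : Module A (structAlg E lab) :=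
  inferInstance

/-- The group ring `ℤ[Λ]`. -/
abbrev GrpRing (Λ : Type*) [AddCommGroup Λ] := AddMonoidAlgebra ℤ Λ

variable {Λ : Type*} [AddCommGroup Λ]

/-- The basis element `e^μ` of the group ring `ℤ[Λ]`. -/
def grExp (μ : Λ) : GrpRing Λ := AddMonoidAlgebra.single μ 1

/-- The element `x_μ = 1 - e^{-μ}` of the group ring `ℤ[Λ]`. -/
def grX (μ : Λ) : GrpRing Λ := 1 - grExp (-μ)

/-- The augmentation `ℤ[Λ] → ℤ`, `e^λ ↦ 1`. -/
def grAug (Λ : Type*) [AddCommGroup Λ] : GrpRing Λ →+* ℤ :=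
  ((AddMonoidAlgebra.lift ℤ ℤ Λ) 1).toRingHom

/-- The augmentation ideal `I_m ⊂ ℤ[Λ]`. -/
def Im (Λ : Type*) [AddCommGroup Λ] : Ideal (GrpRing Λ) := RingHom.ker (grAug Λ)

/-- The multiplicative structure algebra of edge data `(E, lab)`:
tuples `(z_v)` of elements of `ℤ[Λ]` with `z_v - z_w ∈ x_{lab v w}·ℤ[Λ]`
for all edges. -/
abbrev ZmOf {V : Type*} (E : V → V → Prop) (lab : V → V → Λ) :
    Subalgebra (GrpRing Λ) (V → GrpRing Λ) :=
  structAlg E fun v w => grX (lab v w)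

/-- The multiplicative structure algebra `Z_m(Γ)` of a moment graph. -/
abbrev MomentGraph.Zm {V : Type*} (G : MomentGraph Λ V) :
    Subalgebra (GrpRing Λ) (V → GrpRing Λ) :=
  ZmOf G.E G.label

/-- Index type of a chosen basis of the lattice `Λ`. -/
abbrev bIdx (Λ : Type*) [AddCommGroup Λ] [Module.Free ℤ Λ] [Module.Finite ℤ Λ] :=
  Module.Free.ChooseBasisIndex ℤ Λ

/-- A model of the symmetric algebra `S^*(Λ)` over `ℤ`: the polynomial ring on a
basis of `Λ`. -/
abbrev SymZ (Λ : Type*) [AddCommGroup Λ] [Module.Free ℤ Λ] [Module.Finite ℤ Λ] :=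
  MvPolynomial (bIdx Λ) ℤ

variable [Module.Free ℤ Λ] [Module.Finite ℤ Λ]

/-- The canonical embedding `Λ → S^*(Λ)` (degree-one part). -/
def iotaZ (Λ : Type*) [AddCommGroup Λ] [Module.Free ℤ Λ] [Module.Finite ℤ Λ] :
    Λ →ₗ[ℤ] SymZ Λ :=
  (Finsupp.linearCombination ℤ fun i => (MvPolynomial.X i : SymZ Λ)).comp
    (Module.Free.chooseBasis ℤ Λ).repr.toLinearMap

/-- The additive structure algebra of edge data `(E, lab)`:
tuples `(z_v)` of elements of `S^*(Λ)` with `z_v - z_w ∈ l(v→w)·S^*(Λ)`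
for all edges. -/
abbrev ZaOf {V : Type*} (E : V → V → Prop) (lab : V → V → Λ) :
    Subalgebra (SymZ Λ) (V → SymZ Λ) :=
  structAlg E fun v w => iotaZ Λ (lab v w)

/-- The additive structure algebra `Z_a(Γ)` of a moment graph. -/
abbrev MomentGraph.Za {V : Type*} (G : MomentGraph Λ V) :
    Subalgebra (SymZ Λ) (V → SymZ Λ) :=
  ZaOf G.E G.label

end StructureAlgebras

noncomputable section Statements
open MomentGraph
variable {Λ : Type*} [AddCommGroup Λ] [Module.Free ℤ Λ] [Module.Finite ℤ Λ]
variable {V V' : Type*}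


lemma grExp_add' (a b : Λ) : grExp (a + b) = grExp a * grExp b := by
  simp [grExp, AddMonoidAlgebra.single_mul_single]

lemma grExp_zero' : grExp (0 : Λ) = 1 := rfl

lemma dvd_mul_sub_one {A : Type*} [CommRing A] {d x y : A}
    (hx : d ∣ x - 1) (hy : d ∣ y - 1) : d ∣ x * y - 1 := by
  obtain ⟨t, ht⟩ := hx
  obtain ⟨s, hs⟩ := hy
  exact ⟨x * s + t, by linear_combination x * hs + ht⟩

lemma grX_dvd_exp_sub_one (l : Λ) : grX l ∣ grExp l - 1 := by
  have h : grExp (-l) * grExp l = 1 := by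
    rw [← grExp_add']; simp [grExp_zero']
  exact ⟨grExp l, by unfold grX; linear_combination h⟩

lemma grX_dvd_exp_neg_sub_one (l : Λ) : grX l ∣ grExp (-l) - 1 :=
  ⟨-1, by unfold grX; ring⟩

lemma grX_dvd_zsmul (l : Λ) (n : ℤ) : grX l ∣ grExp (n • l) - 1 := by
  induction n using Int.induction_on with
  | zero => simp [grExp_zero']
  | succ n ih =>
      have h : ((n : ℤ) + 1) • l = (n : ℤ) • l + l := by rw [add_smul, one_smul]
      rw [h, grExp_add']
      exact dvd_mul_sub_one ih (grX_dvd_exp_sub_one l)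
  | pred n ih =>
      have h : (-(n : ℤ) - 1) • l = (-(n : ℤ)) • l + (-l) := by
        rw [sub_smul, one_smul, sub_eq_add_neg]
      rw [h, grExp_add']
      exact dvd_mul_sub_one ih (grX_dvd_exp_neg_sub_one l)

lemma grX_dvd_sub_exp {l a b : Λ} {n : ℤ} (h : a - b = n • l) :
    grX l ∣ grExp a - grExp b := by
  have key : grExp a - grExp b = grExp b * (grExp (n • l) - 1) := by
    rw [mul_sub, ← grExp_add', mul_one]
    congr 2
    rw [← h]; abel
  rw [key]
  exact Dvd.dvd.mul_left (grX_dvd_zsmul l n) _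

lemma iotaZ_basis (i : bIdx Λ) :
    iotaZ Λ (Module.Free.chooseBasis ℤ Λ i) = MvPolynomial.X i := by
  simp [iotaZ]

theorem stmt4 (G : MomentGraph Λ V) (ξ : V → (Λ ≃ₗ[ℤ] Λ)) (hmon : G.Monodromy ξ)
    (gξ : V → (GrpRing Λ →+* GrpRing Λ))
    (hgξ : ∀ v (μ : Λ), gξ v (grExp μ) = grExp (ξ v μ))
    (sξ : V → (SymZ Λ →+* SymZ Λ))
    (hsξ : ∀ v (μ : Λ), sξ v (iotaZ Λ μ) = iotaZ Λ (ξ v μ)) :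
    (∃ c : GrpRing Λ →+* G.Zm, ∀ (z : GrpRing Λ) (v : V),
        (c z : V → GrpRing Λ) v = gξ v z) ∧
    (∃ c' : SymZ Λ →+* G.Za, ∀ (p : SymZ Λ) (v : V),
        (c' p : V → SymZ Λ) v = sξ v p) := by
  constructor
  · -- multiplicative part
    have hmem : ∀ z : GrpRing Λ, (fun v => gξ v z) ∈ G.Zm := by
      intro z v w h
      set I : Ideal (GrpRing Λ) := Ideal.span {grX (G.label v w)} with hI
      have heq : (Ideal.Quotient.mk I).comp (gξ v) = (Ideal.Quotient.mk I).comp (gξ w) := by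
        apply AddMonoidAlgebra.ringHom_ext
        · intro r
          have hs : (AddMonoidAlgebra.single (0 : Λ) r : GrpRing Λ) = r • (1 : GrpRing Λ) := by
            rw [AddMonoidAlgebra.one_def]
            simp [Finsupp.smul_single]
          simp only [RingHom.comp_apply, hs, map_zsmul, map_one]
        · intro a
          simp only [RingHom.comp_apply]
          rw [show (AddMonoidAlgebra.single a (1 : ℤ) : GrpRing Λ) = grExp a from rfl,
            hgξ, hgξ]
          rw [Ideal.Quotient.eq]
          obtain ⟨n, hn⟩ := hmon h a
          exact Ideal.mem_span_singleton.mpr (grX_dvd_sub_exp hn)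
      have := RingHom.congr_fun heq z
      simp only [RingHom.comp_apply] at this
      rw [Ideal.Quotient.eq] at this
      obtain ⟨t, ht⟩ := Ideal.mem_span_singleton.mp this
      exact ⟨t, ht⟩
    exact ⟨(Pi.ringHom gξ).codRestrict _ hmem, fun z v => rfl⟩
  · -- additive part
    have hmem : ∀ p : SymZ Λ, (fun v => sξ v p) ∈ G.Za := by
      intro p v w h
      set I : Ideal (SymZ Λ) := Ideal.span {iotaZ Λ (G.label v w)} with hI
      have heq : (Ideal.Quotient.mk I).comp (sξ v) = (Ideal.Quotient.mk I).comp (sξ w) := by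
        apply MvPolynomial.ringHom_ext
        · intro r
          have hs : (MvPolynomial.C r : SymZ Λ) = r • (1 : SymZ Λ) := by
            simp [zsmul_eq_mul]
          simp only [RingHom.comp_apply, hs, map_zsmul, map_one]
        · intro i
          simp only [RingHom.comp_apply]
          rw [← iotaZ_basis i, hsξ, hsξ, Ideal.Quotient.eq]
          obtain ⟨n, hn⟩ := hmon h (Module.Free.chooseBasis ℤ Λ i)
          refine Ideal.mem_span_singleton.mpr ⟨(n : SymZ Λ), ?_⟩
          rw [← map_sub, hn, map_zsmul, zsmul_eq_mul]
          ring
      have := RingHom.congr_fun heq p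
      simp only [RingHom.comp_apply] at this
      rw [Ideal.Quotient.eq] at this
      obtain ⟨t, ht⟩ := Ideal.mem_span_singleton.mp this
      exact ⟨t, ht⟩
    exact ⟨(Pi.ringHom sξ).codRestrict _ hmem, fun p v => rfl⟩

end Statements
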